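/- arXiv:1809.06880 — 6 statements merged into one kernel-verified Lean document; each statement's English description precedes it below -/
import Mathlib

section
/- For density matrices ρ and σ, the maximal coherence tensorizes: η(ρ ⊗ σ) = max{η(ρ), η(σ)}. -/
open scoped ComplexOrder

open Kronecker Matrix

noncomputable def eta {n : Type*} [Fintype n] (A : Matrix n n ℂ) : ℝ :=
  sSup {x : ℝ | ∃ i j : n, i ≠ j ∧ A i i ≠ 0 ∧ A j j ≠ 0 ∧
    x = ‖A i j‖ / Real.sqrt ((A i i).re * (A j j).re)}

section aux

variable {n : Type*} [Fintype n]

lemma diag_nonneg' {A : Matrix n n ℂ} (hA : A.PosSemidef) (i : n) : 0 ≤ A i i := by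
  classical
  exact hA.diag_nonneg

lemma diag_eq_re' {A : Matrix n n ℂ} (hA : A.PosSemidef) (i : n) :
    A i i = ((A i i).re : ℂ) := by
  have h := diag_nonneg' hA i
  rw [Complex.nonneg_iff] at h
  exact Complex.ext (by simp) (by simp [← h.2])

lemma diag_im_zero' {A : Matrix n n ℂ} (hA : A.PosSemidef) (i : n) :
    (A i i).im = 0 := by
  have h := diag_nonneg' hA i
  rw [Complex.nonneg_iff] at h
  exact h.2.symm

lemma diag_re_pos' {A : Matrix n n ℂ} (hA : A.PosSemidef) {i : n} (hi : A i i ≠ 0) :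
    0 < (A i i).re := by
  have h := diag_nonneg' hA i
  rw [Complex.nonneg_iff] at h
  rcases h.1.lt_or_eq with h1 | h1
  · exact h1
  · exact absurd (Complex.ext h1.symm h.2.symm) hi

lemma abs_sq_le' {A : Matrix n n ℂ} (hA : A.PosSemidef) (i j : n) :
    ‖A i j‖ ^ 2 ≤ (A i i).re * (A j j).re := by
  classical
  obtain ⟨B, rfl⟩ : ∃ B : Matrix n n ℂ, A = Bᴴ * B := by
    open scoped MatrixOrder in exact CStarAlgebra.nonneg_iff_eq_star_mul_self.mp hA.nonneg
  have hz : ∀ z : ℂ, (star z * z).re = ‖z‖ ^ 2 := by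
    intro z
    rw [Complex.star_def, ← Complex.normSq_eq_conj_mul_self, Complex.ofReal_re,
      Complex.sq_norm]
  have hd : ∀ k : n, ((Bᴴ * B) k k).re = ∑ m, ‖B m k‖ ^ 2 := by
    intro k
    simp only [Matrix.mul_apply, Matrix.conjTranspose_apply, Complex.re_sum, hz]
  have h1 : ‖(Bᴴ * B) i j‖ ≤ ∑ m, ‖B m i‖ * ‖B m j‖ := by
    simp only [Matrix.mul_apply, Matrix.conjTranspose_apply]
    refine (norm_sum_le _ _).trans_eq ?_
    congr 1; funext m
    rw [norm_mul, Complex.star_def, Complex.norm_conj]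
  calc ‖(Bᴴ * B) i j‖ ^ 2
      ≤ (∑ m, ‖B m i‖ * ‖B m j‖) ^ 2 := by
        apply pow_le_pow_left₀ (norm_nonneg _) h1
    _ ≤ (∑ m, ‖B m i‖ ^ 2) * (∑ m, ‖B m j‖ ^ 2) :=
        Finset.sum_mul_sq_le_sq_mul_sq _ _ _
    _ = ((Bᴴ * B) i i).re * ((Bᴴ * B) j j).re := by rw [hd i, hd j]

lemma abs_le_sqrt' {A : Matrix n n ℂ} (hA : A.PosSemidef) (i j : n) :
    ‖A i j‖ ≤ Real.sqrt ((A i i).re * (A j j).re) := by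
  rw [show ‖A i j‖ = Real.sqrt (‖A i j‖ ^ 2) by
    rw [Real.sqrt_sq (norm_nonneg _)]]
  exact Real.sqrt_le_sqrt (abs_sq_le' hA i j)

lemma ratio_le_one' {A : Matrix n n ℂ} (hA : A.PosSemidef) (i j : n) :
    ‖A i j‖ / Real.sqrt ((A i i).re * (A j j).re) ≤ 1 :=
  div_le_one_of_le₀ (abs_le_sqrt' hA i j) (Real.sqrt_nonneg _)

lemma eta_mem_nonneg {A : Matrix n n ℂ} {x : ℝ}
    (hx : x ∈ {x : ℝ | ∃ i j : n, i ≠ j ∧ A i i ≠ 0 ∧ A j j ≠ 0 ∧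
      x = ‖A i j‖ / Real.sqrt ((A i i).re * (A j j).re)}) : 0 ≤ x := by
  obtain ⟨i, j, _, _, _, rfl⟩ := hx
  exact div_nonneg (norm_nonneg _) (Real.sqrt_nonneg _)

lemma eta_bddAbove {A : Matrix n n ℂ} (hA : A.PosSemidef) :
    BddAbove {x : ℝ | ∃ i j : n, i ≠ j ∧ A i i ≠ 0 ∧ A j j ≠ 0 ∧
      x = ‖A i j‖ / Real.sqrt ((A i i).re * (A j j).re)} := by
  refine ⟨1, fun x hx => ?_⟩
  obtain ⟨i, j, _, _, _, rfl⟩ := hx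
  exact ratio_le_one' hA i j

lemma eta_nonneg' (A : Matrix n n ℂ) : 0 ≤ eta A :=
  Real.sSup_nonneg (fun _ hx => eta_mem_nonneg hx)

end aux

theorem stmt_2 {d₁ d₂ : ℕ} (ρ : Matrix (Fin d₁) (Fin d₁) ℂ)
    (σ : Matrix (Fin d₂) (Fin d₂) ℂ) (hρ : ρ.PosSemidef) (hσ : σ.PosSemidef)
    (hρtr : ρ.trace = 1) (hσtr : σ.trace = 1) :
    eta (ρ ⊗ₖ σ) = max (eta ρ) (eta σ) := by
  classical
  set T := ρ ⊗ₖ σ with hT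
  -- existence of nonzero diagonal entries
  have hex_ρ : ∃ i : Fin d₁, ρ i i ≠ 0 := by
    by_contra h
    push_neg at h
    have : ρ.trace = 0 := by simp [Matrix.trace, Matrix.diag, h]
    rw [hρtr] at this; exact one_ne_zero this
  have hex_σ : ∃ k : Fin d₂, σ k k ≠ 0 := by
    by_contra h
    push_neg at h
    have : σ.trace = 0 := by simp [Matrix.trace, Matrix.diag, h]
    rw [hσtr] at this; exact one_ne_zero this
  -- entry formula
  have hTapp : ∀ (i j : Fin d₁) (k l : Fin d₂), T (i, k) (j, l) = ρ i j * σ k l := by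
    intro i j k l; simp [hT, Matrix.kroneckerMap_apply]
  -- ρ-set included in T-set
  have hsubρ : {x : ℝ | ∃ i j : Fin d₁, i ≠ j ∧ ρ i i ≠ 0 ∧ ρ j j ≠ 0 ∧
      x = ‖ρ i j‖ / Real.sqrt ((ρ i i).re * (ρ j j).re)} ⊆
      {x : ℝ | ∃ p q : Fin d₁ × Fin d₂, p ≠ q ∧ T p p ≠ 0 ∧ T q q ≠ 0 ∧
      x = ‖T p q‖ / Real.sqrt ((T p p).re * (T q q).re)} := by
    rintro x ⟨i, j, hij, hi, hj, rfl⟩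
    obtain ⟨k, hk⟩ := hex_σ
    have hs : 0 < (σ k k).re := diag_re_pos' hσ hk
    refine ⟨(i, k), (j, k), by simp [hij], by simp [hTapp, hi, hk],
      by simp [hTapp, hj, hk], ?_⟩
    rw [hTapp, hTapp, hTapp]
    have hσkk : σ k k = ((σ k k).re : ℂ) := diag_eq_re' hσ k
    set s := (σ k k).re
    rw [norm_mul]
    have h1 : ‖σ k k‖ = s := by rw [hσkk]; simp [abs_of_nonneg hs.le]
    have h2 : (ρ i i * σ k k).re = (ρ i i).re * s := by
      rw [Complex.mul_re, diag_im_zero' hσ k]; simp [s]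
    have h3 : (ρ j j * σ k k).re = (ρ j j).re * s := by
      rw [Complex.mul_re, diag_im_zero' hσ k]; simp [s]
    rw [h1, h2, h3]
    have h4 : (ρ i i).re * s * ((ρ j j).re * s) = (ρ i i).re * (ρ j j).re * s ^ 2 := by ring
    rw [h4, Real.sqrt_mul (mul_nonneg (Complex.nonneg_iff.mp (diag_nonneg' hρ i)).1 (Complex.nonneg_iff.mp (diag_nonneg' hρ j)).1) _,
      Real.sqrt_sq hs.le, mul_div_mul_right _ _ hs.ne']
  -- σ-set included in T-set
  have hsubσ : {x : ℝ | ∃ k l : Fin d₂, k ≠ l ∧ σ k k ≠ 0 ∧ σ l l ≠ 0 ∧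
      x = ‖σ k l‖ / Real.sqrt ((σ k k).re * (σ l l).re)} ⊆
      {x : ℝ | ∃ p q : Fin d₁ × Fin d₂, p ≠ q ∧ T p p ≠ 0 ∧ T q q ≠ 0 ∧
      x = ‖T p q‖ / Real.sqrt ((T p p).re * (T q q).re)} := by
    rintro x ⟨k, l, hkl, hk, hl, rfl⟩
    obtain ⟨i, hi⟩ := hex_ρ
    have hs : 0 < (ρ i i).re := diag_re_pos' hρ hi
    refine ⟨(i, k), (i, l), by simp [hkl], by simp [hTapp, hi, hk],
      by simp [hTapp, hi, hl], ?_⟩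
    rw [hTapp, hTapp, hTapp]
    have hρii : ρ i i = ((ρ i i).re : ℂ) := diag_eq_re' hρ i
    set s := (ρ i i).re
    rw [norm_mul]
    have h1 : ‖ρ i i‖ = s := by rw [hρii]; simp [abs_of_nonneg hs.le]
    have h2 : (ρ i i * σ k k).re = s * (σ k k).re := by
      rw [Complex.mul_re, diag_im_zero' hρ i]; simp [s]
    have h3 : (ρ i i * σ l l).re = s * (σ l l).re := by
      rw [Complex.mul_re, diag_im_zero' hρ i]; simp [s]
    rw [h1, h2, h3]
    have h4 : s * (σ k k).re * (s * (σ l l).re) = (σ k k).re * (σ l l).re * s ^ 2 := by ring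
    rw [h4, Real.sqrt_mul (mul_nonneg (Complex.nonneg_iff.mp (diag_nonneg' hσ k)).1 (Complex.nonneg_iff.mp (diag_nonneg' hσ l)).1) _,
      Real.sqrt_sq hs.le]
    rw [mul_comm s (‖σ k l‖),
      mul_div_mul_right _ _ hs.ne']
  have hfact : ∀ (i j : Fin d₁) (k l : Fin d₂),
      ‖ρ i j * σ k l‖ /
        Real.sqrt ((ρ i i * σ k k).re * (ρ j j * σ l l).re) =
      (‖ρ i j‖ / Real.sqrt ((ρ i i).re * (ρ j j).re)) *
        (‖σ k l‖ / Real.sqrt ((σ k k).re * (σ l l).re)) := by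
    intro i j k l
    rw [norm_mul]
    have h2 : (ρ i i * σ k k).re = (ρ i i).re * (σ k k).re := by
      rw [Complex.mul_re, diag_im_zero' hσ k]; simp
    have h3 : (ρ j j * σ l l).re = (ρ j j).re * (σ l l).re := by
      rw [Complex.mul_re, diag_im_zero' hσ l]; simp
    rw [h2, h3,
      show (ρ i i).re * (σ k k).re * ((ρ j j).re * (σ l l).re) =
        (ρ i i).re * (ρ j j).re * ((σ k k).re * (σ l l).re) by ring,
      Real.sqrt_mul (mul_nonneg (Complex.nonneg_iff.mp (diag_nonneg' hρ i)).1
        (Complex.nonneg_iff.mp (diag_nonneg' hρ j)).1), div_mul_div_comm]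
  have bddT : BddAbove {x : ℝ | ∃ p q : Fin d₁ × Fin d₂, p ≠ q ∧ T p p ≠ 0 ∧ T q q ≠ 0 ∧
      x = ‖T p q‖ / Real.sqrt ((T p p).re * (T q q).re)} := by
    refine ⟨1, ?_⟩
    rintro x ⟨⟨i, k⟩, ⟨j, l⟩, hpq, hp, hq, rfl⟩
    rw [hTapp, hTapp, hTapp, hfact]
    exact mul_le_one₀ (ratio_le_one' hρ i j)
      (div_nonneg (norm_nonneg _) (Real.sqrt_nonneg _)) (ratio_le_one' hσ k l)
  apply le_antisymm
  · -- eta T ≤ max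
    apply Real.sSup_le
    · rintro x ⟨⟨i, k⟩, ⟨j, l⟩, hpq, hp, hq, rfl⟩
      rw [hTapp] at hp hq
      rw [hTapp, hTapp, hTapp]
      have hρi : ρ i i ≠ 0 := left_ne_zero_of_mul hp
      have hσk : σ k k ≠ 0 := right_ne_zero_of_mul hp
      have hρj : ρ j j ≠ 0 := left_ne_zero_of_mul hq
      have hσl : σ l l ≠ 0 := right_ne_zero_of_mul hq
      have ha : 0 < (ρ i i).re := diag_re_pos' hρ hρi
      have hb : 0 < (ρ j j).re := diag_re_pos' hρ hρj
      have hs : 0 < (σ k k).re := diag_re_pos' hσ hσk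
      have ht : 0 < (σ l l).re := diag_re_pos' hσ hσl
      rw [hfact]
      by_cases hij : i = j
      · -- then k ≠ l and the first factor equals 1
        subst hij
        have hkl : k ≠ l := by
          intro h; exact hpq (by rw [h])
        have hρii : ρ i i = ((ρ i i).re : ℂ) := diag_eq_re' hρ i
        have habs : ‖ρ i i‖ = (ρ i i).re := by
          rw [hρii]; simp [abs_of_nonneg ha.le]
        have h1 : ‖ρ i i‖ / Real.sqrt ((ρ i i).re * (ρ i i).re) = 1 := by
          rw [habs, Real.sqrt_mul_self ha.le, div_self ha.ne']
        rw [h1, one_mul]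
        refine le_trans ?_ (le_max_right _ _)
        exact le_csSup (eta_bddAbove hσ) ⟨k, l, hkl, hσk, hσl, rfl⟩
      · refine le_trans ?_ (le_max_left _ _)
        have hf : ‖ρ i j‖ / Real.sqrt ((ρ i i).re * (ρ j j).re) ≤ eta ρ :=
          le_csSup (eta_bddAbove hρ) ⟨i, j, hij, hρi, hρj, rfl⟩
        refine le_trans ?_ hf
        exact mul_le_of_le_one_right
          (div_nonneg (norm_nonneg _) (Real.sqrt_nonneg _)) (ratio_le_one' hσ k l)
    · exact le_trans (eta_nonneg' ρ) (le_max_left _ _)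
  · -- max ≤ eta T
    have key : ∀ s : Set ℝ, s ⊆ {x : ℝ | ∃ p q : Fin d₁ × Fin d₂, p ≠ q ∧ T p p ≠ 0 ∧
        T q q ≠ 0 ∧ x = ‖T p q‖ / Real.sqrt ((T p p).re * (T q q).re)} →
        sSup s ≤ eta T := by
      intro s hsub
      rcases s.eq_empty_or_nonempty with rfl | hne
      · simpa [Real.sSup_empty] using eta_nonneg' T
      · exact csSup_le_csSup bddT hne hsub
    exact max_le (key _ hsubρ) (key _ hsubσ)
end

section
/- Let Λ(·) = Σ_α U_{π_α}ᵀ D_α (·) D_α* U_{π_α} be a quantum channel on d×d matrices, where each π_α is a permutation of {1,…,d}, U_{π_α} = Σ_i |π_α(i)⟩⟨i|, and D_α = Σ_i d_α(i)|i⟩⟨i| are diagonal matrices. Then for every density matrix ρ, η(Λ(ρ)) ≤ η(ρ). -/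
open scoped ComplexOrder

lemma quad_nonneg {n : Type*} [Fintype n] [DecidableEq n] {ρ : Matrix n n ℂ}
    (hρ : ρ.PosSemidef) (i j : n) (z : ℂ) :
    0 ≤ (ρ i i).re + 2 * (z * ρ i j).re + ‖z‖ ^ 2 * (ρ j j).re := by
  have h := hρ.re_dotProduct_nonneg (Pi.single i 1 + Pi.single j z)
  have hji : ρ j i = (starRingEnd ℂ) (ρ i j) := by
    have := hρ.1; rw [Matrix.IsHermitian] at this
    conv_lhs => rw [← this]
    simp [Matrix.conjTranspose_apply]
  simp only [star_add, ← Pi.single_star, Matrix.mulVec_add, Matrix.mulVec_single,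
    dotProduct_add, add_dotProduct, single_dotProduct, Pi.add_apply, hji] at h
  convert h using 1
  simp [Complex.star_def, RCLike.re_to_complex, Complex.add_re, Complex.mul_re,
    Complex.conj_re, Complex.conj_im, Complex.sq_norm, Complex.normSq_apply, hji]
  ring

lemma diag_re_nonneg {n : Type*} [Fintype n] [DecidableEq n] {ρ : Matrix n n ℂ}
    (hρ : ρ.PosSemidef) (i : n) : 0 ≤ (ρ i i).re := by
  have h := hρ.re_dotProduct_nonneg (Pi.single i 1)
  simpa [← Pi.single_star, Matrix.mulVec_single, single_dotProduct] using h

lemma abs_sq_le {n : Type*} [Fintype n] [DecidableEq n] {ρ : Matrix n n ℂ}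
    (hρ : ρ.PosSemidef) (i j : n) :
    ‖ρ i j‖ ^ 2 ≤ (ρ i i).re * (ρ j j).re := by
  by_cases h0 : ρ i j = 0
  · simpa [h0] using mul_nonneg (diag_re_nonneg hρ i) (diag_re_nonneg hρ j)
  set r : ℝ := ‖ρ i j‖ with hr
  have hrpos : 0 < r := norm_pos_iff.mpr h0
  set u : ℂ := -((starRingEnd ℂ) (ρ i j)) / r with hu
  have hquad : ∀ t : ℝ, 0 ≤ (ρ j j).re * (t * t) + (-(2 * r)) * t + (ρ i i).re := by
    intro t
    have h := quad_nonneg hρ i j ((t : ℂ) * u)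
    have hc : ρ i j * (starRingEnd ℂ) (ρ i j) = ((r : ℂ)) ^ 2 := by
      rw [Complex.mul_conj, ← Complex.sq_norm, ← hr]; norm_cast
    have h1 : ((t : ℂ) * u) * ρ i j = ((-(t * r) : ℝ) : ℂ) := by
      rw [hu]
      field_simp
      push_cast
      linear_combination (-(t : ℂ)) * hc
    have h2 : ‖(t : ℂ) * u‖ ^ 2 = t ^ 2 := by
      rw [norm_mul, hu]
      simp [map_div₀, Complex.norm_real, ← hr, abs_of_pos hrpos, div_self hrpos.ne',
        Complex.norm_conj]
    rw [h1, h2] at h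
    simp only [Complex.ofReal_re] at h
    nlinarith [h]
  have hd := discrim_le_zero hquad
  rw [discrim] at hd
  nlinarith [hd]

theorem stmt_3 {d : ℕ} {α : Type*} [Fintype α]
    (π : α → Equiv.Perm (Fin d)) (c : α → Fin d → ℂ)
    (htp : ∀ i : Fin d, ∑ a : α, ‖c a i‖ ^ 2 = 1)
    (ρ : Matrix (Fin d) (Fin d) ℂ) (hρ : ρ.PosSemidef) (htr : ρ.trace = 1)
    (Λρ : Matrix (Fin d) (Fin d) ℂ)
    (hΛ : ∀ i j : Fin d, Λρ i j =
      ∑ a : α, c a (π a i) * (starRingEnd ℂ) (c a (π a j)) * ρ (π a i) (π a j)) :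
    eta Λρ ≤ eta ρ := by
  classical
  have hetaρ_nonneg : 0 ≤ eta ρ := Real.sSup_nonneg (by
    rintro x ⟨i, j, hij, hii, hjj, rfl⟩
    positivity)
  have hbdd : BddAbove {x : ℝ | ∃ i j : Fin d, i ≠ j ∧ ρ i i ≠ 0 ∧ ρ j j ≠ 0 ∧
      x = ‖ρ i j‖ / Real.sqrt ((ρ i i).re * (ρ j j).re)} := by
    apply Set.Finite.bddAbove
    apply Set.Finite.subset (Set.finite_range (fun p : Fin d × Fin d =>
      ‖ρ p.1 p.2‖ / Real.sqrt ((ρ p.1 p.1).re * (ρ p.2 p.2).re)))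
    rintro x ⟨i, j, _, _, _, rfl⟩
    exact ⟨(i, j), rfl⟩
  have hdiagρ : ∀ i, ρ i i = ((ρ i i).re : ℂ) := fun i => (hρ.1.coe_re_apply_self i).symm
  -- key entrywise bound
  have hkey : ∀ i j : Fin d, i ≠ j →
      ‖ρ i j‖ ≤ eta ρ * (Real.sqrt (ρ i i).re * Real.sqrt (ρ j j).re) := by
    intro i j hij
    have habs0 : (ρ i i = 0 ∨ ρ j j = 0) → ‖ρ i j‖ = 0 := by
      intro h
      have h2 : ‖ρ i j‖ ^ 2 ≤ 0 := by
        rcases h with h | h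
        · have := abs_sq_le hρ i j; rw [h] at this; simpa using this
        · have := abs_sq_le hρ i j; rw [h] at this; simpa using this
      nlinarith [norm_nonneg (ρ i j)]
    by_cases hii : ρ i i = 0
    · rw [habs0 (Or.inl hii)]; positivity
    by_cases hjj : ρ j j = 0
    · rw [habs0 (Or.inr hjj)]; positivity
    have hmem : ‖ρ i j‖ / Real.sqrt ((ρ i i).re * (ρ j j).re) ∈
        {x : ℝ | ∃ i j : Fin d, i ≠ j ∧ ρ i i ≠ 0 ∧ ρ j j ≠ 0 ∧
          x = ‖ρ i j‖ / Real.sqrt ((ρ i i).re * (ρ j j).re)} :=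
      ⟨i, j, hij, hii, hjj, rfl⟩
    have hle : ‖ρ i j‖ / Real.sqrt ((ρ i i).re * (ρ j j).re) ≤ eta ρ :=
      le_csSup hbdd hmem
    have hiire : 0 < (ρ i i).re := by
      rcases lt_or_eq_of_le (diag_re_nonneg hρ i) with h | h
      · exact h
      · exact absurd (by rw [hdiagρ i, ← h]; simp) hii
    have hjjre : 0 < (ρ j j).re := by
      rcases lt_or_eq_of_le (diag_re_nonneg hρ j) with h | h
      · exact h
      · exact absurd (by rw [hdiagρ j, ← h]; simp) hjj
    rw [Real.sqrt_mul hiire.le] at hle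
    have hpos : 0 < Real.sqrt (ρ i i).re * Real.sqrt (ρ j j).re := by positivity
    exact (div_le_iff₀ hpos).1 hle
  -- diagonal of Λρ is a nonnegative real
  have hΛcoe : ∀ i : Fin d, Λρ i i =
      ((∑ a, ‖c a (π a i)‖ ^ 2 * (ρ (π a i) (π a i)).re : ℝ) : ℂ) := by
    intro i
    rw [hΛ i i]
    push_cast
    refine Finset.sum_congr rfl fun a _ => ?_
    rw [Complex.mul_conj, ← Complex.sq_norm]
    conv_lhs => rw [hdiagρ (π a i)]
    push_cast
    ring
  have hΛre : ∀ i : Fin d, (Λρ i i).re =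
      ∑ a, ‖c a (π a i)‖ ^ 2 * (ρ (π a i) (π a i)).re := by
    intro i; rw [hΛcoe i, Complex.ofReal_re]
  have hΛre_nonneg : ∀ i : Fin d, 0 ≤ (Λρ i i).re := by
    intro i; rw [hΛre i]
    exact Finset.sum_nonneg fun a _ =>
      mul_nonneg (by positivity) (diag_re_nonneg hρ (π a i))
  -- main bound
  refine Real.sSup_le ?_ hetaρ_nonneg
  rintro x ⟨i, j, hij, hii, hjj, rfl⟩
  have hApos : 0 < (Λρ i i).re := by
    rcases lt_or_eq_of_le (hΛre_nonneg i) with h | h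
    · exact h
    · exact absurd (by rw [hΛcoe i, ← hΛre i, ← h]; simp) hii
  have hBpos : 0 < (Λρ j j).re := by
    rcases lt_or_eq_of_le (hΛre_nonneg j) with h | h
    · exact h
    · exact absurd (by rw [hΛcoe j, ← hΛre j, ← h]; simp) hjj
  -- chain of inequalities
  have step1 : ‖Λρ i j‖ ≤ ∑ a, ‖c a (π a i)‖ *
      ‖c a (π a j)‖ * ‖ρ (π a i) (π a j)‖ := by
    rw [hΛ i j]
    refine (norm_sum_le _ _).trans_eq ?_
    refine Finset.sum_congr rfl fun a _ => ?_
    simp [map_mul, Complex.norm_conj]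
  have step2 : (∑ a, ‖c a (π a i)‖ * ‖c a (π a j)‖ *
      ‖ρ (π a i) (π a j)‖) ≤ eta ρ *
      ∑ a, (‖c a (π a i)‖ * Real.sqrt (ρ (π a i) (π a i)).re) *
        (‖c a (π a j)‖ * Real.sqrt (ρ (π a j) (π a j)).re) := by
    rw [Finset.mul_sum]
    refine Finset.sum_le_sum fun a _ => ?_
    have h := hkey (π a i) (π a j) (fun h => hij ((π a).injective h))
    calc ‖c a (π a i)‖ * ‖c a (π a j)‖ *
        ‖ρ (π a i) (π a j)‖
        ≤ ‖c a (π a i)‖ * ‖c a (π a j)‖ *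
          (eta ρ * (Real.sqrt (ρ (π a i) (π a i)).re * Real.sqrt (ρ (π a j) (π a j)).re)) :=
          mul_le_mul_of_nonneg_left h (by positivity)
      _ = eta ρ * ((‖c a (π a i)‖ * Real.sqrt (ρ (π a i) (π a i)).re) *
          (‖c a (π a j)‖ * Real.sqrt (ρ (π a j) (π a j)).re)) := by ring
  have step3 : (∑ a, (‖c a (π a i)‖ * Real.sqrt (ρ (π a i) (π a i)).re) *
      (‖c a (π a j)‖ * Real.sqrt (ρ (π a j) (π a j)).re)) ≤
      Real.sqrt (Λρ i i).re * Real.sqrt (Λρ j j).re := by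
    have hcs := Finset.sum_sq_le_sum_mul_sum_of_sq_eq_mul Finset.univ
      (r := fun a => (‖c a (π a i)‖ * Real.sqrt (ρ (π a i) (π a i)).re) *
        (‖c a (π a j)‖ * Real.sqrt (ρ (π a j) (π a j)).re))
      (f := fun a => ‖c a (π a i)‖ ^ 2 * (ρ (π a i) (π a i)).re)
      (g := fun a => ‖c a (π a j)‖ ^ 2 * (ρ (π a j) (π a j)).re)
      (fun a _ => mul_nonneg (by positivity) (diag_re_nonneg hρ (π a i)))
      (fun a _ => mul_nonneg (by positivity) (diag_re_nonneg hρ (π a j)))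
      (fun a _ => by
        rw [mul_pow, mul_pow, mul_pow, Real.sq_sqrt (diag_re_nonneg hρ (π a i)),
          Real.sq_sqrt (diag_re_nonneg hρ (π a j))]
        try ring)
    have hS : 0 ≤ ∑ a, (‖c a (π a i)‖ * Real.sqrt (ρ (π a i) (π a i)).re) *
        (‖c a (π a j)‖ * Real.sqrt (ρ (π a j) (π a j)).re) :=
      Finset.sum_nonneg fun a _ => by positivity
    calc (∑ a, (‖c a (π a i)‖ * Real.sqrt (ρ (π a i) (π a i)).re) *
        (‖c a (π a j)‖ * Real.sqrt (ρ (π a j) (π a j)).re))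
        = Real.sqrt ((∑ a, (‖c a (π a i)‖ * Real.sqrt (ρ (π a i) (π a i)).re) *
          (‖c a (π a j)‖ * Real.sqrt (ρ (π a j) (π a j)).re)) ^ 2) :=
          (Real.sqrt_sq hS).symm
      _ ≤ Real.sqrt ((Λρ i i).re * (Λρ j j).re) := by
          apply Real.sqrt_le_sqrt
          rw [hΛre i, hΛre j]
          exact hcs
      _ = Real.sqrt (Λρ i i).re * Real.sqrt (Λρ j j).re := Real.sqrt_mul hApos.le _
  have hfinal : ‖Λρ i j‖ ≤ eta ρ *
      (Real.sqrt (Λρ i i).re * Real.sqrt (Λρ j j).re) := by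
    refine step1.trans (step2.trans ?_)
    exact mul_le_mul_of_nonneg_left step3 hetaρ_nonneg
  rw [Real.sqrt_mul hApos.le]
  have hpos : 0 < Real.sqrt (Λρ i i).re * Real.sqrt (Λρ j j).re := by positivity
  exact (div_le_iff₀ hpos).2 hfinal
end

section
/- Let ρ be a density matrix with strictly positive diagonal. Define the relation i ∼ j iff |ρ_{ij}| = √(ρ_{ii}ρ_{jj}) (including i = j). Then ∼ is an equivalence relation on {1,…,d}; that is, the graph G_ρ with edge set E_ρ = {(i,j) : |ρ_{ij}| = √(ρ_{ii}ρ_{jj})} has connected components which are all cliques. -/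
open scoped ComplexOrder

theorem stmt_7 {d : ℕ} (ρ : Matrix (Fin d) (Fin d) ℂ) (hρ : ρ.PosSemidef)
    (htr : ρ.trace = 1) (hdiag : ∀ i, 0 < (ρ i i).re) :
    Equivalence (fun i j : Fin d =>
      ‖ρ i j‖ = Real.sqrt ((ρ i i).re * (ρ j j).re)) := by
  classical
  open scoped MatrixOrder Matrix.Norms.L2Operator in
  set S := CFC.sqrt ρ with hS
  set u : Fin d → EuclideanSpace ℂ (Fin d) := fun i => WithLp.toLp 2 (fun k => S k i) with hu
  have herm : S.IsHermitian := (Matrix.nonneg_iff_posSemidef.mp (CFC.sqrt_nonneg ρ)).1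
  have key : ∀ i j, ρ i j = inner ℂ (u i) (u j) := by
    intro i j
    have : (S * S) i j = ρ i j := by rw [CFC.sqrt_mul_sqrt_self ρ hρ.nonneg]
    rw [← this]
    simp only [Matrix.mul_apply, PiLp.inner_apply, RCLike.inner_apply, hu]
    refine Finset.sum_congr rfl fun k _ => ?_
    rw [← herm.apply k i]
    simp [mul_comm]
  have hnorm : ∀ i, ‖u i‖ = Real.sqrt ((ρ i i).re) := by
    intro i
    have h1 : ‖u i‖ ^ 2 = (ρ i i).re := by
      rw [key i i, ← inner_self_eq_norm_sq (𝕜 := ℂ) (u i)]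
      simp [RCLike.re_to_complex]
    rw [← h1]
    rw [Real.sqrt_sq (norm_nonneg _)]
  have hne : ∀ i, u i ≠ 0 := by
    intro i h
    have := hnorm i
    rw [h, norm_zero] at this
    have h2 := hdiag i
    have := Real.sqrt_pos.mpr h2
    linarith
  have hrel : ∀ i j, (‖ρ i j‖ = Real.sqrt ((ρ i i).re * (ρ j j).re))
      ↔ ‖(inner ℂ (u i) (u j) : ℂ)‖ = ‖u i‖ * ‖u j‖ := by
    intro i j
    rw [key i j, Real.sqrt_mul (le_of_lt (hdiag i)), ← hnorm i, ← hnorm j]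
  constructor
  · intro i
    rw [hrel]
    rw [inner_self_eq_norm_sq_to_K]
    simp [pow_two]
  · intro i j h
    rw [hrel] at h ⊢
    rw [← inner_conj_symm (u j) (u i), RCLike.norm_conj, h, mul_comm]
  · intro i j k hij hjk
    rw [hrel] at hij hjk ⊢
    obtain ⟨r, hr, hj⟩ := (norm_inner_eq_norm_iff (hne i) (hne j)).1 hij
    obtain ⟨s, hs, hk⟩ := (norm_inner_eq_norm_iff (hne j) (hne k)).1 hjk
    rw [hk, hj, smul_smul]
    rw [inner_smul_right, norm_smul, norm_mul, inner_self_eq_norm_sq_to_K]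
    simp [pow_two]
    ring
end

section
/- Let ρ be a density matrix with strictly positive diagonal, and let {I_s}_{s∈S} be the partition of {1,…,d} into equivalence classes of the relation |ρ_{ij}| = √(ρ_{ii}ρ_{jj}). Then for each s, the compressed matrix Π_{I_s} ρ Π_{I_s} has rank one, where Π_{I_s} = Σ_{i∈I_s} |i⟩⟨i|. -/
open scoped ComplexOrder

open scoped Classical

/-- Key lemma: for a PSD matrix, saturation of Cauchy–Schwarz at `(i₀,i)` and `(i₀,j)`
forces `ρ i j * ρ i₀ i₀ = ρ i i₀ * ρ i₀ j`. -/
lemma key_lemma {d : ℕ} (ρ : Matrix (Fin d) (Fin d) ℂ) (hρ : ρ.PosSemidef)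
    (hdiag : ∀ i, 0 < (ρ i i).re) (i₀ i j : Fin d)
    (hi : ‖ρ i₀ i‖ = Real.sqrt ((ρ i₀ i₀).re * (ρ i i).re))
    (hj : ‖ρ i₀ j‖ = Real.sqrt ((ρ i₀ i₀).re * (ρ j j).re)) :
    ρ i j * ρ i₀ i₀ = ρ i i₀ * ρ i₀ j := by
  obtain ⟨B, hB⟩ : ∃ B : Matrix (Fin d) (Fin d) ℂ, ρ = B.conjTranspose * B := by
    open MatrixOrder in
    obtain ⟨B, hB⟩ := CStarAlgebra.nonneg_iff_eq_star_mul_self.mp hρ.nonneg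
    exact ⟨B, hB⟩
  set u : Fin d → EuclideanSpace ℂ (Fin d) := fun i => WithLp.toLp 2 (fun k => B k i) with hu
  have hinner : ∀ a b, ρ a b = inner ℂ (u a) (u b) := by
    intro a b
    simp [hB, Matrix.mul_apply, PiLp.inner_apply, hu, RCLike.inner_apply,
      Matrix.conjTranspose_apply, mul_comm]
  have hnorm : ∀ a, ‖u a‖ = Real.sqrt ((ρ a a).re) := by
    intro a
    rw [@norm_eq_sqrt_re_inner ℂ, ← hinner]
    simp [RCLike.re_to_complex]
  have hne : ∀ a, u a ≠ 0 := by
    intro a h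
    have h0 : ρ a a = 0 := by rw [hinner, h]; simp
    have h1 := hdiag a
    rw [h0] at h1; simp at h1
  have habs : ∀ a, ‖ρ i₀ a‖ = Real.sqrt ((ρ i₀ i₀).re * (ρ a a).re) →
      ∃ r : ℂ, r ≠ 0 ∧ u a = r • u i₀ := by
    intro a ha
    refine (norm_inner_eq_norm_iff (hne i₀) (hne a)).mp ?_
    rw [← hinner]
    rw [hnorm, hnorm, ← Real.sqrt_mul (hdiag i₀).le]
    simpa using ha
  obtain ⟨r, hr0, hr⟩ := habs i hi
  obtain ⟨t, ht0, ht⟩ := habs j hj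
  rw [hinner i j, hinner i₀ i₀, hinner i i₀, hinner i₀ j, hr, ht]
  simp only [inner_smul_left, inner_smul_right]
  ring

theorem stmt_8 {d : ℕ} (ρ : Matrix (Fin d) (Fin d) ℂ) (hρ : ρ.PosSemidef)
    (htr : ρ.trace = 1) (hdiag : ∀ i, 0 < (ρ i i).re)
    (Rel : Fin d → Fin d → Prop)
    (hRel : ∀ i j, Rel i j ↔
      ‖ρ i j‖ = Real.sqrt ((ρ i i).re * (ρ j j).re)) :
    ∀ i₀ : Fin d,
      (Matrix.of fun i j : Fin d =>
        if Rel i₀ i ∧ Rel i₀ j then ρ i j else 0).rank = 1 := by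
  intro i₀
  set M : Matrix (Fin d) (Fin d) ℂ :=
    Matrix.of fun i j : Fin d => if Rel i₀ i ∧ Rel i₀ j then ρ i j else 0 with hM
  have hdreal : ∀ a, ρ a a = ((ρ a a).re : ℂ) := by
    intro a
    have h := hρ.isHermitian.apply a a
    exact (Complex.conj_eq_iff_re.mp h).symm
  have hc0 : ρ i₀ i₀ ≠ 0 := by
    intro h
    have := hdiag i₀
    rw [h] at this
    simp at this
  have hrel₀ : Rel i₀ i₀ := by
    rw [hRel]
    rw [Real.sqrt_mul_self (hdiag i₀).le, hdreal i₀]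
    simp [Complex.norm_real, abs_of_pos (hdiag i₀)]
  -- rank ≤ 1 : M is (col v) * (row w)
  set v : Fin d → ℂ := fun i => if Rel i₀ i then ρ i i₀ * (ρ i₀ i₀)⁻¹ else 0 with hv
  set w : Fin d → ℂ := fun j => if Rel i₀ j then ρ i₀ j else 0 with hw
  have hfac : M = Matrix.replicateCol (Fin 1) v * Matrix.replicateRow (Fin 1) w := by
    ext i j
    simp only [hM, Matrix.mul_apply, Matrix.replicateCol_apply, Matrix.replicateRow_apply,
      Finset.sum_const, Finset.card_univ, Fintype.card_fin, one_smul, Matrix.of_apply]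
    by_cases hi : Rel i₀ i
    · by_cases hj : Rel i₀ j
      · simp only [hi, hj, and_self, if_true, hv, hw]
        have := key_lemma ρ hρ hdiag i₀ i j ((hRel i₀ i).mp hi) ((hRel i₀ j).mp hj)
        field_simp
        linear_combination this
      · simp [hi, hj, hv, hw]
    · simp [hi, hv]
  have hle : M.rank ≤ 1 := by
    rw [hfac]
    exact (Matrix.rank_mul_le_left _ _).trans
      ((Matrix.rank_le_card_width _).trans_eq (by simp))
  have hne0 : M.rank ≠ 0 := by
    intro h0
    have hbot : LinearMap.range M.mulVecLin = ⊥ := by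
      have := Submodule.finrank_eq_zero (R := ℂ) (M := Fin d → ℂ)
        (S := LinearMap.range M.mulVecLin)
      exact this.mp h0
    have : M.mulVec (Pi.single i₀ 1) = 0 := by
      have : M.mulVec (Pi.single i₀ 1) ∈ LinearMap.range M.mulVecLin := ⟨_, rfl⟩
      rw [hbot] at this
      simpa using this
    have h1 : M.mulVec (Pi.single i₀ 1) i₀ = ρ i₀ i₀ := by
      simp [Matrix.mulVec_single, hM, hrel₀]
    rw [this] at h1
    exact hc0 (by simpa using h1.symm)
  omega
end

section
/- Let ρ be a density matrix with strictly positive diagonal, E_ρ = {(i,j) : |ρ_{ij}| = √(ρ_{ii}ρ_{jj})}, and define the trimmed matrix ρ̄ := Σ_{(i,j)∈E_ρ} ρ_{ij}|i⟩⟨j|. Then ρ̄ = Σ_{s∈S} Π_{I_s} ρ Π_{I_s} where {I_s} are the equivalence classes of E_ρ; in particular ρ̄ is a positive semidefinite matrix of unit trace (a legitimate density matrix) with the same diagonal as ρ. -/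
open scoped ComplexOrder

open scoped Classical

noncomputable def trim {d : ℕ} (ρ : Matrix (Fin d) (Fin d) ℂ) :
    Matrix (Fin d) (Fin d) ℂ :=
  Matrix.of fun i j =>
    if ‖ρ i j‖ = Real.sqrt ((ρ i i).re * (ρ j j).re) then ρ i j else 0

theorem stmt_9 {d : ℕ} (ρ : Matrix (Fin d) (Fin d) ℂ) (hρ : ρ.PosSemidef)
    (htr : ρ.trace = 1) (hdiag : ∀ i, 0 < (ρ i i).re)
    (c : Fin d → Fin d)
    (hc : ∀ i j : Fin d, c i = c j ↔
      ‖ρ i j‖ = Real.sqrt ((ρ i i).re * (ρ j j).re)) :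
    trim ρ = ∑ s : Fin d,
        (Matrix.diagonal fun i => if c i = s then (1 : ℂ) else 0) * ρ *
          (Matrix.diagonal fun i => if c i = s then (1 : ℂ) else 0) ∧
      (trim ρ).PosSemidef ∧ (trim ρ).trace = 1 ∧ ∀ i, trim ρ i i = ρ i i := by
  have htrim : ∀ i j, trim ρ i j = if c i = c j then ρ i j else 0 := by
    intro i j
    simp only [trim, Matrix.of_apply]
    by_cases h : c i = c j
    · rw [if_pos ((hc i j).mp h), if_pos h]
    · rw [if_neg (fun h' => h ((hc i j).mpr h')), if_neg h]
  have hdiagtrim : ∀ i, trim ρ i i = ρ i i := by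
    intro i; rw [htrim]; simp
  have heq : trim ρ = ∑ s : Fin d,
      (Matrix.diagonal fun i => if c i = s then (1 : ℂ) else 0) * ρ *
        (Matrix.diagonal fun i => if c i = s then (1 : ℂ) else 0) := by
    ext i j
    rw [htrim, Matrix.sum_apply]
    simp only [Matrix.mul_diagonal, Matrix.diagonal_mul]
    rw [Finset.sum_eq_single (c i)]
    · by_cases h : c i = c j
      · simp [h]
      · have h' : ¬ c j = c i := fun h' => h h'.symm
        simp [h, h']
    · intro s _ hs
      simp [Ne.symm hs]
    · simp
  refine ⟨heq, ?_, ?_, hdiagtrim⟩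
  · rw [heq]
    apply Finset.sum_induction _ (fun M : Matrix (Fin d) (Fin d) ℂ => M.PosSemidef)
      (fun a b ha hb => ha.add hb) Matrix.PosSemidef.zero
    intro s _
    have hH : Matrix.conjTranspose (Matrix.diagonal fun i => if c i = s then (1 : ℂ) else 0) =
        (Matrix.diagonal fun i => if c i = s then (1 : ℂ) else 0) := by
      have hstar : (star fun i => if c i = s then (1 : ℂ) else 0) =
          fun i => if c i = s then (1 : ℂ) else 0 := by
        funext i
        by_cases h : c i = s <;> simp [h, Pi.star_apply]
      rw [Matrix.diagonal_conjTranspose, hstar]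
    have := hρ.mul_mul_conjTranspose_same
      (Matrix.diagonal fun i => if c i = s then (1 : ℂ) else 0)
    rwa [hH] at this
  · have h2 : (trim ρ).trace = ρ.trace := by
      simp [Matrix.trace, Matrix.diag, hdiagtrim]
    rw [h2, htr]
end

section
/- For the qubit state ρ_λ = λΨ₂ + (1−λ)·(1/2)·I with λ ∈ [0,1], and for every n ≥ 1, there exist a diagonal Hermitian matrix D and an entrywise nonnegative matrix N of size 2ⁿ×2ⁿ such that |ρ_λ^{⊗n}| + D + N = λΨ₂^{⊗n}; consequently ‖|ρ_λ^{⊗n}| + D + N‖₁ = λ. -/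
open scoped ComplexOrder

noncomputable def psi2 : Matrix (Fin 2) (Fin 2) ℂ := Matrix.of fun _ _ => 1 / 2

noncomputable def rhoLam (l : ℝ) : Matrix (Fin 2) (Fin 2) ℂ :=
  (l : ℂ) • psi2 + ((1 - l : ℝ) : ℂ) • ((1 / 2 : ℂ) • 1)

lemma rhoLam_eq (l : ℝ) (a b : Fin 2) :
    rhoLam l a b = (((if a = b then 1 else l) / 2 : ℝ) : ℂ) := by
  simp only [rhoLam, psi2, Matrix.add_apply, Matrix.smul_apply, Matrix.of_apply,
    Matrix.one_apply, smul_eq_mul]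
  by_cases h : a = b <;> simp [h] <;> push_cast <;> ring

theorem stmt_15 (l : ℝ) (hl0 : 0 ≤ l) (hl1 : l ≤ 1) (n : ℕ) (hn : 1 ≤ n) :
    ∃ D N : Matrix (Fin n → Fin 2) (Fin n → Fin 2) ℂ,
      (∀ i j, i ≠ j → D i j = 0) ∧ D.IsHermitian ∧
      (∀ i j, (N i j).im = 0 ∧ 0 ≤ (N i j).re) ∧
      (Matrix.of fun i j =>
          ((‖∏ k, rhoLam l (i k) (j k)‖ : ℝ) : ℂ)) + D + N =
        (l : ℂ) • Matrix.of (fun i j => ∏ k, psi2 (i k) (j k)) ∧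
      ((l : ℂ) • Matrix.of
          (fun i j : Fin n → Fin 2 => ∏ k, psi2 (i k) (j k))).PosSemidef ∧
      ((l : ℂ) • Matrix.of
          (fun i j : Fin n → Fin 2 => ∏ k, psi2 (i k) (j k))).trace = l := by
  classical
  -- the real product of factors
  set P : (Fin n → Fin 2) → (Fin n → Fin 2) → ℝ :=
    fun i j => ∏ k, (if i k = j k then (1 : ℝ) else l) with hP
  have hPnonneg : ∀ i j, 0 ≤ P i j := fun i j =>
    Finset.prod_nonneg fun k _ => by by_cases h : i k = j k <;> simp [h, hl0]
  have hPle : ∀ i j, i ≠ j → P i j ≤ l := by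
    intro i j hij
    obtain ⟨k0, hk0⟩ : ∃ k, i k ≠ j k := by
      by_contra h; push_neg at h; exact hij (funext h)
    have h1 : P i j = (if i k0 = j k0 then (1:ℝ) else l) *
        ∏ k ∈ Finset.univ.erase k0, (if i k = j k then (1:ℝ) else l) :=
      (Finset.mul_prod_erase _ _ (Finset.mem_univ k0)).symm
    have h2 : ∏ k ∈ Finset.univ.erase k0, (if i k = j k then (1:ℝ) else l) ≤ 1 :=
      Finset.prod_le_one (fun k _ => by by_cases h : i k = j k <;> simp [h, hl0])
        (fun k _ => by by_cases h : i k = j k <;> simp [h, hl1])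
    rw [h1, if_neg hk0]
    calc l * ∏ k ∈ Finset.univ.erase k0, (if i k = j k then (1:ℝ) else l)
        ≤ l * 1 := by
          apply mul_le_mul_of_nonneg_left h2 hl0
      _ = l := mul_one l
  have hPdiag : ∀ i, P i i = 1 := fun i => by simp [hP]
  -- value of the abs matrix
  have habs : ∀ i j : Fin n → Fin 2,
      ((‖∏ k, rhoLam l (i k) (j k)‖ : ℝ) : ℂ) = ((P i j / 2 ^ n : ℝ) : ℂ) := by
    intro i j
    have : (∏ k, rhoLam l (i k) (j k)) = ((P i j / 2 ^ n : ℝ) : ℂ) := by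
      simp only [rhoLam_eq, hP]
      push_cast
      rw [Finset.prod_div_distrib]
      simp
    rw [this, Complex.norm_real, Real.norm_eq_abs, abs_of_nonneg (by positivity)]
  refine ⟨Matrix.diagonal (fun _ => (((l - 1) / 2 ^ n : ℝ) : ℂ)),
    Matrix.of fun i j => if i = j then 0 else (((l - P i j) / 2 ^ n : ℝ) : ℂ),
    ?_, ?_, ?_, ?_, ?_, ?_⟩
  · intro i j hij; simp [Matrix.diagonal_apply_ne _ hij]
  · exact Matrix.isHermitian_diagonal_iff.mpr fun i => Complex.conj_ofReal _
  · intro i j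
    by_cases h : i = j
    · simp [h]
    · simp only [Matrix.of_apply, if_neg h]
      refine ⟨Complex.ofReal_im _, ?_⟩
      rw [Complex.ofReal_re]
      exact div_nonneg (sub_nonneg.mpr (hPle i j h)) (by positivity)
  · ext i j
    simp only [Matrix.add_apply, Matrix.of_apply, Matrix.smul_apply, habs, psi2,
      Matrix.of_apply, smul_eq_mul]
    by_cases h : i = j
    · subst h
      rw [Matrix.diagonal_apply_eq, if_pos rfl, hPdiag]
      push_cast
      rw [Finset.prod_const]
      simp
      ring
    · rw [Matrix.diagonal_apply_ne _ h, if_neg h]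
      push_cast
      rw [Finset.prod_const]
      simp
      ring
  · set v : Matrix (Fin 1) (Fin n → Fin 2) ℂ :=
      Matrix.of fun _ _ => ((Real.sqrt (l / 2 ^ n) : ℝ) : ℂ) with hv
    have key : ((l : ℂ) • Matrix.of
        (fun i j : Fin n → Fin 2 => ∏ k, psi2 (i k) (j k))) = v.conjTranspose * v := by
      ext i j
      simp only [Matrix.mul_apply, Matrix.conjTranspose_apply, Matrix.of_apply,
        Matrix.smul_apply, smul_eq_mul, psi2, Finset.prod_const, Finset.card_univ,
        Fintype.card_fin, Finset.sum_const, one_smul, Complex.star_def,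
        Complex.conj_ofReal, Finset.univ_unique, Finset.sum_singleton,
        Finset.card_singleton, hv]
      rw [← Complex.ofReal_mul, Real.mul_self_sqrt (by positivity)]
      push_cast
      rw [div_pow, one_pow]
      ring
    rw [key]
    exact Matrix.posSemidef_conjTranspose_mul_self _
  · have hcard : Fintype.card (Fin n → Fin 2) = 2 ^ n := by
      rw [Fintype.card_fun]; simp
    have h2 : ((2:ℂ))^n * (1/2:ℂ)^n = 1 := by rw [← mul_pow]; norm_num
    simp only [Matrix.trace, Matrix.diag_apply, Matrix.smul_apply, Matrix.of_apply,
      psi2, Finset.prod_const, Finset.card_univ, Fintype.card_fin,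
      Finset.sum_const, smul_eq_mul, nsmul_eq_mul, hcard]
    push_cast
    rw [mul_comm ((2:ℂ)^n), mul_assoc, mul_comm ((1/2:ℂ)^n), h2, mul_one]
end
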